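/- Let G(s) = L + (s/(1−s))·W on the complete graph with V vertices, where W is diagonal, W_m = 0 its unique smallest eigenvalue, and ‖W‖ ≤ V. Let g(s) := g_{{m}}(s) = V − λ₀(G(s)) − 1 where λ₀(G(s)) is the ground eigenvalue of G(s). If 0 ≤ δs ≤ (c₀/(4V))·g(s)·(1−s) for some c₀ ∈ (0,1), then |g(s + δs) − g(s)| ≤ c₀·g(s). -/

import Mathlib

open Matrix

/-- The smallest eigenvalue of a Hermitian matrix. -/
noncomputable def lamMin {n : ℕ} {A : Matrix (Fin n) (Fin n) ℝ}
    (hA : A.IsHermitian) : ℝ :=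
  ⨅ i, hA.eigenvalues i

/-- The combinatorial Laplacian of the complete graph on `V` vertices:
`L = V·I − J`, where `J` is the all-ones matrix. -/
def cgL (V : ℕ) : Matrix (Fin V) (Fin V) ℝ :=
  (V : ℝ) • (1 : Matrix (Fin V) (Fin V) ℝ) - Matrix.of (fun _ _ => (1 : ℝ))

/-- The rescaled interpolating Hamiltonian `G(s) = L + (s/(1−s))·W`. -/
noncomputable def cgG (V : ℕ) (W : Fin V → ℝ) (s : ℝ) : Matrix (Fin V) (Fin V) ℝ :=
  cgL V + (s / (1 - s)) • Matrix.diagonal W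

lemma lamMin_le {n : ℕ} [NeZero n] {A : Matrix (Fin n) (Fin n) ℝ}
    (hA : A.IsHermitian) (i : Fin n) : lamMin hA ≤ hA.eigenvalues i :=
  ciInf_le (Set.Finite.bddBelow (Set.finite_range _)) i

lemma lamMin_exists {n : ℕ} [NeZero n] {A : Matrix (Fin n) (Fin n) ℝ}
    (hA : A.IsHermitian) :
    ∃ v : Fin n → ℝ, v ⬝ᵥ v = 1 ∧ A *ᵥ v = lamMin hA • v := by
  obtain ⟨i, hi⟩ := exists_eq_ciInf_of_finite (f := hA.eigenvalues)
  refine ⟨⇑(hA.eigenvectorBasis i), ?_, ?_⟩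
  · have h1 : ‖hA.eigenvectorBasis i‖ = 1 := hA.eigenvectorBasis.orthonormal.1 i
    rw [EuclideanSpace.norm_eq] at h1
    have h2 : ∑ j, (hA.eigenvectorBasis i j) ^ 2 = 1 := by
      have := congrArg (· ^ 2) h1
      simpa [Real.sq_sqrt (Finset.sum_nonneg fun j _ => sq_nonneg _)] using this
    simpa [dotProduct, sq] using h2
  · have := hA.mulVec_eigenvectorBasis i
    rw [hi] at this
    exact this

lemma lamMin_rayleigh {n : ℕ} [NeZero n] {A : Matrix (Fin n) (Fin n) ℝ}
    (hA : A.IsHermitian) (x : Fin n → ℝ) :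
    lamMin hA * (x ⬝ᵥ x) ≤ x ⬝ᵥ (A *ᵥ x) := by
  set U : Matrix (Fin n) (Fin n) ℝ := (hA.eigenvectorUnitary : Matrix (Fin n) (Fin n) ℝ) with hU
  have hUmem := hA.eigenvectorUnitary.2
  have hUU : U * star U = 1 := (Matrix.mem_unitaryGroup_iff).mp hUmem
  set y : Fin n → ℝ := star U *ᵥ x with hy
  have hyy : y = x ᵥ* U := by
    rw [hy, Matrix.star_eq_conjTranspose, conjTranspose_eq_transpose_of_trivial,
      mulVec_transpose]
  have key : ∀ M : Matrix (Fin n) (Fin n) ℝ, x ⬝ᵥ ((U * M * star U) *ᵥ x) = y ⬝ᵥ (M *ᵥ y) := by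
    intro M
    rw [← mulVec_mulVec, ← mulVec_mulVec, dotProduct_mulVec, ← hyy, ← hy]
  have hxx : x ⬝ᵥ x = y ⬝ᵥ y := by
    have h := key 1
    rw [mul_one, hUU, one_mulVec, one_mulVec] at h
    exact h
  have hAx : x ⬝ᵥ (A *ᵥ x) = ∑ i, hA.eigenvalues i * (y i)^2 := by
    conv_lhs => rw [hA.spectral_theorem]
    rw [show (RCLike.ofReal ∘ hA.eigenvalues : Fin n → ℝ) = hA.eigenvalues from rfl,
      Unitary.conjStarAlgAut_apply, key]
    simp only [dotProduct, mulVec_diagonal, sq]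
    exact Finset.sum_congr rfl fun i _ => by ring
  rw [hAx, hxx]
  have h2 : lamMin hA * (y ⬝ᵥ y) = ∑ i, lamMin hA * (y i)^2 := by
    simp [dotProduct, Finset.mul_sum, sq]
  rw [h2]
  exact Finset.sum_le_sum fun i _ => by
    have := lamMin_le hA i
    nlinarith [sq_nonneg (y i)]

/-- `lamMin` of a positive scalar multiple. -/
lemma lamMin_smul_eq {n : ℕ} [NeZero n] {A B : Matrix (Fin n) (Fin n) ℝ}
    (hA : A.IsHermitian) (hB : B.IsHermitian) {a : ℝ} (ha : 0 < a)
    (hBA : B = a • A) : lamMin hB = a * lamMin hA := by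
  obtain ⟨v, hv1, hv2⟩ := lamMin_exists hA
  obtain ⟨w, hw1, hw2⟩ := lamMin_exists hB
  have h1 : lamMin hB ≤ a * lamMin hA := by
    have h := lamMin_rayleigh hB v
    rw [hv1, mul_one] at h
    have hBv : v ⬝ᵥ (B *ᵥ v) = a * lamMin hA := by
      rw [hBA, smul_mulVec, hv2, dotProduct_smul, dotProduct_smul,
        smul_eq_mul, smul_eq_mul, hv1, mul_one]
    linarith
  have h2 : a * lamMin hA ≤ lamMin hB := by
    have := lamMin_rayleigh hA w
    rw [hw1, mul_one] at this
    have h3 : w ⬝ᵥ (B *ᵥ w) = lamMin hB := by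
      rw [hw2, dotProduct_smul, smul_eq_mul, hw1, mul_one]
    have h4 : w ⬝ᵥ (B *ᵥ w) = a * (w ⬝ᵥ (A *ᵥ w)) := by
      rw [hBA, smul_mulVec, dotProduct_smul, smul_eq_mul]
    nlinarith
  linarith

/-- Weyl-type perturbation bound for the smallest eigenvalue. -/
lemma lamMin_diff_bound {n : ℕ} [NeZero n] {A B : Matrix (Fin n) (Fin n) ℝ}
    (hA : A.IsHermitian) (hB : B.IsHermitian) {r : ℝ}
    (hr : ∀ x : Fin n → ℝ, x ⬝ᵥ x = 1 → |x ⬝ᵥ ((B - A) *ᵥ x)| ≤ r) :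
    |lamMin hB - lamMin hA| ≤ r := by
  obtain ⟨v, hv1, hv2⟩ := lamMin_exists hA
  obtain ⟨w, hw1, hw2⟩ := lamMin_exists hB
  have hEv := abs_le.mp (hr v hv1)
  have hEw := abs_le.mp (hr w hw1)
  have hv3 : v ⬝ᵥ ((B - A) *ᵥ v) = v ⬝ᵥ (B *ᵥ v) - lamMin hA := by
    rw [sub_mulVec, dotProduct_sub, hv2, dotProduct_smul, smul_eq_mul, hv1, mul_one]
  have hw3 : w ⬝ᵥ ((B - A) *ᵥ w) = lamMin hB - w ⬝ᵥ (A *ᵥ w) := by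
    rw [sub_mulVec, dotProduct_sub, hw2, dotProduct_smul, smul_eq_mul, hw1, mul_one]
  have h1 : lamMin hB ≤ v ⬝ᵥ (B *ᵥ v) := by
    have := lamMin_rayleigh hB v; rwa [hv1, mul_one] at this
  have h2 : lamMin hA ≤ w ⬝ᵥ (A *ᵥ w) := by
    have := lamMin_rayleigh hA w; rwa [hw1, mul_one] at this
  rw [abs_le]
  constructor <;> [linarith [hEw.1, hw3 ▸ hEw.1]; linarith [hEv.2, hv3 ▸ hEv.2]]

/-- The unrescaled Hamiltonian `H(t) = (1−t)·L + t·W`. -/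
noncomputable def cgH (V : ℕ) (W : Fin V → ℝ) (t : ℝ) : Matrix (Fin V) (Fin V) ℝ :=
  (1 - t) • cgL V + t • Matrix.diagonal W

lemma cgL_isHermitian (V : ℕ) : (cgL V).IsHermitian := by
  unfold Matrix.IsHermitian
  ext i j
  simp [cgL, conjTranspose_apply, one_apply, eq_comm]

lemma cgH_isHermitian (V : ℕ) (W : Fin V → ℝ) (t : ℝ) : (cgH V W t).IsHermitian := by
  unfold Matrix.IsHermitian cgH
  rw [conjTranspose_add, conjTranspose_smul, conjTranspose_smul, cgL_isHermitian,
    (isHermitian_diagonal W : _)]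
  simp

lemma dot_cgL (V : ℕ) (x : Fin V → ℝ) :
    x ⬝ᵥ (cgL V *ᵥ x) = (V : ℝ) * (x ⬝ᵥ x) - (∑ i, x i) ^ 2 := by
  simp only [cgL, sub_mulVec, dotProduct_sub, smul_mulVec, one_mulVec,
    dotProduct_smul, smul_eq_mul]
  congr 1
  simp only [dotProduct, mulVec, Matrix.of_apply, one_mul]
  rw [sq, Finset.sum_mul]

lemma dot_diag (V : ℕ) (W : Fin V → ℝ) (x : Fin V → ℝ) :
    x ⬝ᵥ (Matrix.diagonal W *ᵥ x) = ∑ i, W i * (x i) ^ 2 := by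
  simp only [dotProduct, mulVec_diagonal, sq]
  exact Finset.sum_congr rfl fun i _ => by ring

lemma dot_cgL_nonneg {V : ℕ} (x : Fin V → ℝ) : 0 ≤ x ⬝ᵥ (cgL V *ᵥ x) := by
  rw [dot_cgL]
  have h := sq_sum_le_card_mul_sum_sq (s := (Finset.univ : Finset (Fin V))) (f := x)
  simp only [Finset.card_univ, Fintype.card_fin] at h
  have : x ⬝ᵥ x = ∑ i, x i ^ 2 := by
    simp [dotProduct, sq]
  rw [this]
  linarith

lemma cgH_eq_smul_cgG (V : ℕ) (W : Fin V → ℝ) {t : ℝ} (ht : t < 1) :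
    cgH V W t = (1 - t) • cgG V W t := by
  have h1t : (1 : ℝ) - t ≠ 0 := by linarith
  have key : (1 - t) * (t / (1 - t)) = t := by field_simp
  rw [cgG, smul_add, smul_smul, key, cgH]

set_option maxHeartbeats 1000000 in
lemma dot_single_mulVec {n : ℕ} (M : Matrix (Fin n) (Fin n) ℝ) (m : Fin n) :
    (Pi.single m 1 : Fin n → ℝ) ⬝ᵥ (M *ᵥ Pi.single m 1) = M m m := by
  simp [dotProduct, mulVec, Pi.single_apply, mul_ite, ite_mul]

set_option maxHeartbeats 1600000 in
theorem g_perturbation {V : ℕ} (hV : 2 ≤ V) (W : Fin V → ℝ) (m : Fin V)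
    (hWm : W m = 0) (hmin : ∀ u : Fin V, u ≠ m → 0 < W u)
    (hWnorm : ∀ u : Fin V, W u ≤ V)
    (hG : ∀ t : ℝ, (cgG V W t).IsHermitian)
    (s δs c₀ : ℝ) (hc₀ : 0 < c₀) (hc₀' : c₀ < 1)
    (hs0 : 0 ≤ s) (hs1 : s < 1)
    (hδs : 0 ≤ δs)
    (hδs' : δs ≤ c₀ / (4 * V) * (((V : ℝ) - lamMin (hG s) - 1) * (1 - s))) :
    |((V : ℝ) - lamMin (hG (s + δs)) - 1) - ((V : ℝ) - lamMin (hG s) - 1)|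
      ≤ c₀ * ((V : ℝ) - lamMin (hG s) - 1) := by
  haveI : NeZero V := ⟨by omega⟩
  have hV0 : (0:ℝ) < V := by
    have : 0 < V := by omega
    exact_mod_cast this
  have hWnn : ∀ u, 0 ≤ W u := by
    intro u
    by_cases h : u = m
    · rw [h, hWm]
    · exact (hmin u h).le
  have h1s : 0 < 1 - s := by linarith
  set s' := s + δs with hs'
  set lam := lamMin (hG s) with hlamdef
  set lam' := lamMin (hG s') with hlam'def
  set g := (V:ℝ) - lam - 1 with hgdef
  -- nonnegativity of the smallest eigenvalue
  have lam_nonneg : ∀ t : ℝ, 0 ≤ t → t < 1 → 0 ≤ lamMin (hG t) := by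
    intro t ht0 ht1
    obtain ⟨v, hv1, hv2⟩ := lamMin_exists (hG t)
    have hval : v ⬝ᵥ (cgG V W t *ᵥ v) = lamMin (hG t) := by
      rw [hv2, dotProduct_smul, smul_eq_mul, hv1, mul_one]
    rw [← hval, cgG, add_mulVec, dotProduct_add, smul_mulVec, dotProduct_smul,
      smul_eq_mul]
    have h1 := dot_cgL_nonneg (V := V) v
    have h2 : 0 ≤ v ⬝ᵥ (Matrix.diagonal W *ᵥ v) := by
      rw [dot_diag]
      exact Finset.sum_nonneg fun i _ => mul_nonneg (hWnn i) (sq_nonneg _)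
    have h3 : 0 ≤ t / (1 - t) := div_nonneg ht0 (by linarith)
    exact add_nonneg h1 (mul_nonneg h3 h2)
  -- lam ≤ V - 1
  have lam_leV : lam ≤ (V:ℝ) - 1 := by
    have h := lamMin_rayleigh (hG s) (Pi.single m 1)
    have he : (Pi.single m 1 : Fin V → ℝ) ⬝ᵥ Pi.single m 1 = 1 := by
      simp [dotProduct, Pi.single_apply]
    rw [he, mul_one, dot_single_mulVec] at h
    have hmm : cgG V W s m m = (V:ℝ) - 1 := by
      simp [cgG, cgL, Matrix.add_apply, Matrix.sub_apply, Matrix.diagonal_apply_eq,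
        Matrix.one_apply_eq, hWm]
    rw [hmm] at h
    exact h
  have hlam0 : 0 ≤ lam := lam_nonneg s hs0 hs1
  have hg0 : 0 ≤ g := by rw [hgdef]; linarith
  have hgV : g ≤ (V:ℝ) := by rw [hgdef]; linarith
  -- δs is small
  have hδsX : δs * (4 * V) ≤ c₀ * (g * (1 - s)) := by
    rw [div_mul_eq_mul_div, le_div_iff₀ (by positivity)] at hδs'
    linarith
  have hδsB : δs ≤ (1 - s) / 4 := by
    nlinarith [mul_nonneg hg0 h1s.le, mul_le_mul_of_nonneg_right hgV h1s.le,
      mul_le_mul_of_nonneg_right hc₀'.le (mul_nonneg hg0 h1s.le)]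
  have h1s' : 0 < 1 - s' := by rw [hs']; linarith
  have h1shalf : 1 - s ≤ 2 * (1 - s') := by rw [hs']; linarith
  -- scaling identities
  have hmu : lamMin (cgH_isHermitian V W s) = (1 - s) * lam :=
    lamMin_smul_eq (hG s) (cgH_isHermitian V W s) h1s (cgH_eq_smul_cgG V W hs1)
  have hmu' : lamMin (cgH_isHermitian V W s') = (1 - s') * lam' :=
    lamMin_smul_eq (hG s') (cgH_isHermitian V W s') h1s' (cgH_eq_smul_cgG V W (by linarith))
  -- Weyl
  have hWeyl : |lamMin (cgH_isHermitian V W s') - lamMin (cgH_isHermitian V W s)|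
      ≤ (V:ℝ) * δs := by
    apply lamMin_diff_bound
    intro x hx
    have hdiff : cgH V W s' - cgH V W s = δs • (Matrix.diagonal W - cgL V) := by
      rw [hs']
      unfold cgH
      module
    rw [hdiff, smul_mulVec, dotProduct_smul, smul_eq_mul, abs_mul,
      abs_of_nonneg hδs]
    have hqL0 := dot_cgL_nonneg (V := V) x
    have hqLV : x ⬝ᵥ (cgL V *ᵥ x) ≤ (V:ℝ) := by
      rw [dot_cgL, hx]
      nlinarith [sq_nonneg (∑ i, x i)]
    have hxsum : x ⬝ᵥ x = ∑ i, (x i)^2 := by simp [dotProduct, sq]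
    have hqD0 : 0 ≤ x ⬝ᵥ (Matrix.diagonal W *ᵥ x) := by
      rw [dot_diag]
      exact Finset.sum_nonneg fun i _ => mul_nonneg (hWnn i) (sq_nonneg _)
    have hqDV : x ⬝ᵥ (Matrix.diagonal W *ᵥ x) ≤ (V:ℝ) := by
      rw [dot_diag]
      calc ∑ i, W i * (x i)^2 ≤ ∑ i, (V:ℝ) * (x i)^2 :=
            Finset.sum_le_sum fun i _ => mul_le_mul_of_nonneg_right (hWnorm i) (sq_nonneg _)
        _ = (V:ℝ) * (x ⬝ᵥ x) := by rw [hxsum, Finset.mul_sum]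
        _ = (V:ℝ) := by rw [hx, mul_one]
    have habs : |x ⬝ᵥ ((Matrix.diagonal W - cgL V) *ᵥ x)| ≤ (V:ℝ) := by
      rw [sub_mulVec, dotProduct_sub, abs_le]
      constructor <;> linarith
    calc δs * |x ⬝ᵥ ((Matrix.diagonal W - cgL V) *ᵥ x)| ≤ δs * V :=
          mul_le_mul_of_nonneg_left habs hδs
      _ = (V:ℝ) * δs := by ring
  rw [hmu, hmu'] at hWeyl
  obtain ⟨hW1, hW2⟩ := abs_le.mp hWeyl
  -- final algebra
  have hkey : (lam' - lam) * (1 - s') = ((1 - s') * lam' - (1 - s) * lam) + δs * lam := by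
    rw [hs']; ring
  have h2V : 2 * (V:ℝ) * δs ≤ c₀ * g * (1 - s') := by
    have := mul_le_mul_of_nonneg_left h1shalf (mul_nonneg hc₀.le hg0)
    nlinarith
  have hgoal : |lam' - lam| ≤ c₀ * g := by
    rw [← mul_le_mul_iff_of_pos_right h1s']
    calc |lam' - lam| * (1 - s') = |(lam' - lam) * (1 - s')| := by
          rw [abs_mul, abs_of_pos h1s']
      _ ≤ (V:ℝ) * δs + δs * lam := by
          rw [hkey]
          refine (abs_add_le _ _).trans ?_
          rw [abs_of_nonneg (mul_nonneg hδs hlam0)]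
          have hD : |(1 - s') * lam' - (1 - s) * lam| ≤ (V:ℝ) * δs :=
            abs_le.mpr ⟨hW1, hW2⟩
          linarith
      _ ≤ 2 * (V:ℝ) * δs := by nlinarith
      _ ≤ c₀ * g * (1 - s') := h2V
  have hrw : ((V : ℝ) - lam' - 1) - ((V : ℝ) - lam - 1) = -(lam' - lam) := by ring
  rw [hrw, abs_neg]
  exact hgoal
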